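/- Extend KD45 by assuming that for some formula φ the contradiction φ ∧ ¬φ admits a Löb sentence, i.e., there is a formula ψ with ⊢ ψ ↔ (Bψ → (φ ∧ ¬φ)). Then the extended system proves both B(φ ∧ ¬φ) and ¬B(φ ∧ ¬φ), hence every formula. -/
import Mathlib


/-- Formulas of the monomodal language: propositional letters, ⊥, →, and B. -/
inductive Formula : Type
  | atom : Nat → Formula
  | falsum : Formula
  | imp : Formula → Formula → Formula
  | bel : Formula → Formula

namespace Formula

/-- ¬φ := φ → ⊥ -/
def neg (φ : Formula) : Formula := imp φ falsum
/-- φ ∧ ψ := ¬(φ → ¬ψ) -/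
def conj (φ ψ : Formula) : Formula := neg (imp φ (neg ψ))
/-- φ ∨ ψ := ¬φ → ψ -/
def disj (φ ψ : Formula) : Formula := imp (neg φ) ψ
/-- φ ↔ ψ := (φ → ψ) ∧ (ψ → φ) -/
def biimp (φ ψ : Formula) : Formula := conj (imp φ ψ) (imp ψ φ)
/-- ◇_Bφ := ¬B¬φ -/
def dia (φ : Formula) : Formula := neg (bel (neg φ))

/-- φ is a propositional tautology: it is true under every assignment of
truth values to formulas that respects → and ⊥ (so atoms and beled
formulas are treated as opaque propositional units). -/
def Taut (φ : Formula) : Prop :=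
  ∀ v : Formula → Prop,
    (∀ ψ χ, v (imp ψ χ) ↔ (v ψ → v χ)) → ¬ v falsum → v φ

end Formula

open Formula

/-- Derivability in KD45 (for the belief operator B) extended by an
additional set `Ax` of axioms. -/
inductive KD45Ext (Ax : Formula → Prop) : Formula → Prop
  | extra {φ} : Ax φ → KD45Ext Ax φ
  | taut {φ} : Taut φ → KD45Ext Ax φ
  | dist (φ ψ) : KD45Ext Ax (imp (bel (imp φ ψ)) (imp (bel φ) (bel ψ)))
  | axD (φ) : KD45Ext Ax (imp (bel φ) (neg (bel (neg φ))))
  | ax4 (φ) : KD45Ext Ax (imp (bel φ) (bel (bel φ)))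
  | ax5 (φ) : KD45Ext Ax (imp (neg (bel φ)) (bel (neg (bel φ))))
  | mp {φ ψ} : KD45Ext Ax (imp φ ψ) → KD45Ext Ax φ → KD45Ext Ax ψ
  | nec {φ} : KD45Ext Ax φ → KD45Ext Ax (bel φ)

/-- extending KD45 by a Löb sentence ψ ↔ (Bψ → (φ ∧ ¬φ))
for the contradiction φ ∧ ¬φ yields both B(φ ∧ ¬φ) and ¬B(φ ∧ ¬φ),
hence every formula. -/
theorem KD45_lob_sentence_crash (φ ψ : Formula) :
    KD45Ext (fun θ => θ = biimp ψ (imp (bel ψ) (conj φ (neg φ))))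
      (bel (conj φ (neg φ))) ∧
    KD45Ext (fun θ => θ = biimp ψ (imp (bel ψ) (conj φ (neg φ))))
      (neg (bel (conj φ (neg φ)))) ∧
    ∀ ρ, KD45Ext (fun θ => θ = biimp ψ (imp (bel ψ) (conj φ (neg φ)))) ρ := by
  set Ax := (fun θ => θ = biimp ψ (imp (bel ψ) (conj φ (neg φ)))) with hAx
  set χ := conj φ (neg φ) with hχ
  have L : KD45Ext Ax (biimp ψ (imp (bel ψ) χ)) := KD45Ext.extra rfl
  -- extract both directions of the biimp
  have T1 : KD45Ext Ax (imp ψ (imp (bel ψ) χ)) :=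
    KD45Ext.mp (KD45Ext.taut (by
      intro v hv hf
      simp only [Formula.biimp, Formula.conj, Formula.neg, hv]
      tauto)) L
  have T2 : KD45Ext Ax (imp (imp (bel ψ) χ) ψ) :=
    KD45Ext.mp (KD45Ext.taut (by
      intro v hv hf
      simp only [Formula.biimp, Formula.conj, Formula.neg, hv]
      tauto)) L
  -- Bψ → B(Bψ → χ)
  have S1 : KD45Ext Ax (imp (bel ψ) (bel (imp (bel ψ) χ))) :=
    KD45Ext.mp (KD45Ext.dist _ _) (KD45Ext.nec T1)
  -- B(Bψ → χ) → (BBψ → Bχ)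
  have S2 : KD45Ext Ax (imp (bel (imp (bel ψ) χ)) (imp (bel (bel ψ)) (bel χ))) :=
    KD45Ext.dist _ _
  have S4 : KD45Ext Ax (imp (bel ψ) (bel (bel ψ))) := KD45Ext.ax4 _
  -- Bψ → Bχ
  have S3 : KD45Ext Ax (imp (bel ψ) (bel χ)) := by
    have comb : KD45Ext Ax (imp (imp (bel ψ) (bel (imp (bel ψ) χ)))
        (imp (imp (bel (imp (bel ψ) χ)) (imp (bel (bel ψ)) (bel χ)))
        (imp (imp (bel ψ) (bel (bel ψ))) (imp (bel ψ) (bel χ))))) :=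
      KD45Ext.taut (by intro v hv hf; simp only [hv]; tauto)
    exact KD45Ext.mp (KD45Ext.mp (KD45Ext.mp comb S1) S2) S4
  -- ⊢ ¬χ, hence B¬χ
  have negχ : KD45Ext Ax (neg χ) :=
    KD45Ext.taut (by
      intro v hv hf
      simp only [hχ, Formula.conj, Formula.neg, hv]
      tauto)
  have Bnegχ : KD45Ext Ax (bel (neg χ)) := KD45Ext.nec negχ
  have D : KD45Ext Ax (imp (bel χ) (neg (bel (neg χ)))) := KD45Ext.axD _
  -- ¬Bψ
  have nBψ : KD45Ext Ax (neg (bel ψ)) := by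
    have comb : KD45Ext Ax (imp (imp (bel ψ) (bel χ))
        (imp (imp (bel χ) (neg (bel (neg χ))))
        (imp (bel (neg χ)) (neg (bel ψ))))) :=
      KD45Ext.taut (by intro v hv hf; simp only [Formula.neg, hv]; tauto)
    exact KD45Ext.mp (KD45Ext.mp (KD45Ext.mp comb S3) D) Bnegχ
  -- from ¬Bψ get Bψ → χ, hence ψ, hence Bψ
  have hBψχ : KD45Ext Ax (imp (bel ψ) χ) := by
    have comb : KD45Ext Ax (imp (neg (bel ψ)) (imp (bel ψ) χ)) :=
      KD45Ext.taut (by intro v hv hf; simp only [Formula.neg, hv]; tauto)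
    exact KD45Ext.mp comb nBψ
  have hψ : KD45Ext Ax ψ := KD45Ext.mp T2 hBψχ
  have hBψ : KD45Ext Ax (bel ψ) := KD45Ext.nec hψ
  -- explosion
  have all : ∀ ρ, KD45Ext Ax ρ := by
    intro ρ
    have comb : KD45Ext Ax (imp (bel ψ) (imp (neg (bel ψ)) ρ)) :=
      KD45Ext.taut (by intro v hv hf; simp only [Formula.neg, hv]; tauto)
    exact KD45Ext.mp (KD45Ext.mp comb hBψ) nBψ
  exact ⟨all _, all _, all⟩
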